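/- arXiv:2011.00511 — 2 statements merged into one kernel-verified Lean document; each statement's English description precedes it below -/
import Mathlib

section
/- If (T,σ) is a binary tree explaining the BMG (G,σ), then (T,σ) displays every triple in the extended triple set R^bin(G,σ). -/
/-- A rooted phylogenetic tree with leaf set `V`, encoded by its hierarchy of clusters
(the cluster of a vertex is the set of leaves below it; inner vertices of a phylogenetic
tree have at least two children, so vertices correspond bijectively to clusters). -/
structure PhyloTree (V : Type*) where
  clusters : Set (Set V)
  nonempty_of_mem : ∀ A ∈ clusters, A.Nonempty
  univ_mem : Set.univ ∈ clusters
  singleton_mem : ∀ v : V, {v} ∈ clusters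
  nested : ∀ A ∈ clusters, ∀ B ∈ clusters, A ⊆ B ∨ B ⊆ A ∨ Disjoint A B

namespace PhyloTree

variable {V : Type*}

/-- The cluster of the last common ancestor of `x` and `y`: the smallest cluster
containing both (the clusters containing `x` and `y` form a chain, so their
intersection is the smallest one). -/
def lca (T : PhyloTree V) (x y : V) : Set V :=
  ⋂₀ {A | A ∈ T.clusters ∧ x ∈ A ∧ y ∈ A}

/-- The rooted triple `xy|z` (on three pairwise distinct leaves) is displayed by `T`:
`lca(x,y) ≺ lca(x,z) = lca(y,z)`. -/
def Displays (T : PhyloTree V) (x y z : V) : Prop :=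
  x ≠ y ∧ x ≠ z ∧ y ≠ z ∧ T.lca x y ⊂ T.lca x z ∧ T.lca x z = T.lca y z

/-- `T` displays every triple of `R`; a triple `(x, y, z)` encodes `xy|z`. -/
def DisplaysSet (T : PhyloTree V) (R : Set (V × V × V)) : Prop :=
  ∀ t ∈ R, T.Displays t.1 t.2.1 t.2.2

/-- `r(T)`, the set of triples displayed by `T`. -/
def triples (T : PhyloTree V) : Set (V × V × V) :=
  {t | T.Displays t.1 t.2.1 t.2.2}

/-- `T` is binary: every inner vertex (cluster with at least two leaves) has exactly
two children, i.e. splits into two disjoint proper subclusters. -/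
def IsBinary (T : PhyloTree V) : Prop :=
  ∀ A ∈ T.clusters, 1 < A.ncard →
    ∃ B ∈ T.clusters, ∃ D ∈ T.clusters,
      Disjoint B D ∧ B ∪ D = A ∧ B ⊂ A ∧ D ⊂ A

/-- `T'` is a refinement of `T`: they have the same leaf set and `T` is obtained from
`T'` by contracting inner edges, i.e. every cluster of `T` is a cluster of `T'`. -/
def Refines (T' T : PhyloTree V) : Prop :=
  T.clusters ⊆ T'.clusters

end PhyloTree

section BMG

variable {V C : Type*}

/-- `y` is a best match of `x` in the leaf-colored tree `(T,σ)`. -/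
def bestMatch (T : PhyloTree V) (σ : V → C) (x y : V) : Prop :=
  σ x ≠ σ y ∧ ∀ y' : V, σ y' = σ y → T.lca x y ⊆ T.lca x y'

/-- The leaf-colored tree `(T,σ)` explains the vertex-colored digraph `(E,σ)`,
i.e. `(E,σ)` is the best match graph of `(T,σ)`. -/
def Explains (T : PhyloTree V) (σ : V → C) (E : V → V → Prop) : Prop :=
  ∀ x y, E x y ↔ bestMatch T σ x y

/-- `(E,σ)` is a best match graph. -/
def IsBMG (E : V → V → Prop) (σ : V → C) : Prop :=
  ∃ T : PhyloTree V, Explains T σ E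

/-- `(E,σ)` is binary-explainable. -/
def BinaryExplainable (E : V → V → Prop) (σ : V → C) : Prop :=
  ∃ T : PhyloTree V, T.IsBinary ∧ Explains T σ E

/-- The informative triples `R(G,σ)`: `(a,b,b')` encodes `ab|b'`. -/
def informativeTriples (E : V → V → Prop) (σ : V → C) : Set (V × V × V) :=
  {t | σ t.1 ≠ σ t.2.1 ∧ σ t.2.1 = σ t.2.2 ∧ E t.1 t.2.1 ∧ ¬ E t.1 t.2.2}

/-- The forbidden triples `F(G,σ)`: `(a,b,b')` encodes `ab|b'`. -/
def forbiddenTriples (E : V → V → Prop) (σ : V → C) : Set (V × V × V) :=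
  {t | σ t.1 ≠ σ t.2.1 ∧ σ t.2.1 = σ t.2.2 ∧ t.2.1 ≠ t.2.2 ∧ E t.1 t.2.1 ∧ E t.1 t.2.2}

/-- The extended triple set `R^bin(G,σ) = R(G,σ) ∪ {bb'|a : ab|b' ∈ F(G,σ)}`. -/
def Rbin (E : V → V → Prop) (σ : V → C) : Set (V × V × V) :=
  informativeTriples E σ ∪ {t | (t.2.2, t.1, t.2.1) ∈ forbiddenTriples E σ}

/-- Properly colored: arcs only between vertices of distinct colors. -/
def ProperlyColored (E : V → V → Prop) (σ : V → C) : Prop :=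
  ∀ x y, E x y → σ x ≠ σ y

/-- sf-colored: properly colored and every vertex has, for each color (of the graph)
different from its own, at least one out-neighbor of that color. -/
def SfColored (E : V → V → Prop) (σ : V → C) : Prop :=
  ProperlyColored E σ ∧ ∀ x y : V, σ y ≠ σ x → ∃ z, E x z ∧ σ z = σ y

/-- A triple set is consistent if some tree displays all of its triples. -/
def Consistent (R : Set (V × V × V)) : Prop :=
  ∃ T : PhyloTree V, T.DisplaysSet R

/-- The closure `cl(R)`: all triples displayed by every tree displaying `R`. -/
def tripleClosure (R : Set (V × V × V)) : Set (V × V × V) :=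
  {t | ∀ T : PhyloTree V, T.DisplaysSet R → T.Displays t.1 t.2.1 t.2.2}

/-- `(T,σ)` is a least resolved tree for `(E,σ)`: it explains `(E,σ)` and no tree
obtained from it by contracting an edge (i.e. by removing a non-root inner cluster)
explains `(E,σ)`. -/
def IsLRT (T : PhyloTree V) (σ : V → C) (E : V → V → Prop) : Prop :=
  Explains T σ E ∧
    ∀ A ∈ T.clusters, A ≠ Set.univ → 1 < A.ncard →
      ∀ T' : PhyloTree V, T'.clusters = T.clusters \ {A} → ¬ Explains T' σ E

end BMG

section Aho

variable {V : Type*}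

/-- Adjacency in the Aho graph `[R,L]`: `x` and `y` are joined whenever `xy|z ∈ R`
for some `z ∈ L` (only triples with all leaves in `L` are taken into account). -/
def ahoAdj (R : Set (V × V × V)) (L : Set V) (x y : V) : Prop :=
  x ∈ L ∧ y ∈ L ∧ ∃ z ∈ L, (x, y, z) ∈ R ∨ (y, x, z) ∈ R

/-- The vertex set of the connected component of `x` in the Aho graph `[R,L]`. -/
def ahoComponent (R : Set (V × V × V)) (L : Set V) (x : V) : Set V :=
  {y | Relation.ReflTransGen (ahoAdj R L) x y}

/-- The clusters of the Aho tree `Aho(R, V)`: the full leaf set, and recursively the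
connected components of the Aho graphs. -/
inductive IsAhoCluster (R : Set (V × V × V)) : Set V → Prop
  | univ : IsAhoCluster R Set.univ
  | component {L : Set V} {x : V} :
      IsAhoCluster R L → x ∈ L → IsAhoCluster R (ahoComponent R L x)

/-- `T` is the Aho tree (`BUILD` tree) of the triple set `R` on the full leaf set. -/
def IsAhoTree (R : Set (V × V × V)) (T : PhyloTree V) : Prop :=
  T.clusters = {A | IsAhoCluster R A}

/-- The union of the leaf sets of the triples in `R`. -/
def tripleLeaves (R : Set (V × V × V)) : Set V :=
  {v | ∃ t ∈ R, v = t.1 ∨ v = t.2.1 ∨ v = t.2.2}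

end Aho

section Aux

variable {V : Type*} [Fintype V] (T : PhyloTree V)

lemma lca_spec (x y : V) :
    T.lca x y ∈ T.clusters ∧ x ∈ T.lca x y ∧ y ∈ T.lca x y := by
  classical
  set S : Set (Set V) := {A | A ∈ T.clusters ∧ x ∈ A ∧ y ∈ A} with hS
  have hne : S.Nonempty := ⟨Set.univ, T.univ_mem, trivial, trivial⟩
  have hfin : S.Finite := Set.toFinite _
  obtain ⟨M, hM, hmin⟩ : ∃ M ∈ S, ∀ A ∈ S, id A ⊆ id M → id M = id A := by
    obtain ⟨M, hM, hm⟩ := hfin.exists_minimal hne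
    exact ⟨M, hM, fun A hA h => subset_antisymm (hm hA h) h⟩
  have hle : ∀ A ∈ S, M ⊆ A := by
    intro A hA
    rcases T.nested M hM.1 A hA.1 with h | h | h
    · exact h
    · exact (hmin A hA h).le
    · exact absurd hA.2.1 (Set.disjoint_left.mp h hM.2.1)
  have hlca : T.lca x y = M :=
    subset_antisymm (Set.sInter_subset_of_mem hM) (Set.subset_sInter hle)
  rw [hlca]; exact hM

lemma lca_subset {A : Set V} (hA : A ∈ T.clusters) {x y : V}
    (hx : x ∈ A) (hy : y ∈ A) : T.lca x y ⊆ A :=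
  Set.sInter_subset_of_mem ⟨hA, hx, hy⟩

lemma lca_comm (x y : V) : T.lca x y = T.lca y x := by
  have h : {A | A ∈ T.clusters ∧ x ∈ A ∧ y ∈ A} = {A | A ∈ T.clusters ∧ y ∈ A ∧ x ∈ A} := by
    ext A; exact ⟨fun ⟨a, b, c⟩ => ⟨a, c, b⟩, fun ⟨a, b, c⟩ => ⟨a, c, b⟩⟩
  unfold PhyloTree.lca
  rw [h]

lemma lca_comparable (x y z : V) :
    T.lca x y ⊆ T.lca x z ∨ T.lca x z ⊆ T.lca x y := by
  obtain ⟨h1, hx1, -⟩ := lca_spec T x y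
  obtain ⟨h2, hx2, -⟩ := lca_spec T x z
  rcases T.nested _ h1 _ h2 with h | h | h
  · exact Or.inl h
  · exact Or.inr h
  · exact absurd hx2 (Set.disjoint_left.mp h hx1)

/-- If `lca(x,y) ⊂ lca(x,z)` then `lca(y,z) = lca(x,z)`. -/
lemma lca_eq_of_ssubset {x y z : V} (h : T.lca x y ⊂ T.lca x z) :
    T.lca y z = T.lca x z := by
  obtain ⟨hc, hx, hy⟩ := lca_spec T x y
  obtain ⟨hc2, hx2, hz2⟩ := lca_spec T x z
  obtain ⟨hc3, hy3, hz3⟩ := lca_spec T y z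
  have hy2 : y ∈ T.lca x z := h.1 hy
  have h1 : T.lca y z ⊆ T.lca x z := lca_subset T hc2 hy2 hz2
  have h2 : T.lca x z ⊆ T.lca y z := by
    -- lca y z and lca x y both contain y, hence comparable
    rcases T.nested _ hc3 _ hc with h' | h' | h'
    · -- lca y z ⊆ lca x y : then z ∈ lca x y so lca x z ⊆ lca x y, contra ⊂
      exact absurd (lca_subset T hc hx (h' hz3)) h.2
    · -- lca x y ⊆ lca y z : then x ∈ lca y z so lca x z ⊆ lca y z
      exact lca_subset T hc3 (h' hx) hz3
    · exact absurd hy3 (Set.disjoint_left.mp h'.symm hy)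
  exact subset_antisymm h1 h2

end Aux

/-- Lemma: bin-displays-Rbin.
If `(T,σ)` is a binary tree explaining the BMG `(G,σ)`, then `(T,σ)` displays every
triple in the extended triple set `R^bin(G,σ)`. -/
theorem stmt1 {V C : Type*} [Fintype V] (E : V → V → Prop) (σ : V → C)
    (T : PhyloTree V) (hbin : T.IsBinary) (hexp : Explains T σ E) :
    T.DisplaysSet (Rbin E σ) := by
  rintro ⟨x, y, z⟩ (ht | ht)
  · -- informative triple: x=a, y=b, z=b'
    obtain ⟨hcab, hcbb, hEab, hnEab'⟩ := ht
    dsimp only at hcab hcbb hEab hnEab' ⊢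
    obtain ⟨hσ, hbm⟩ := (hexp x y).mp hEab
    have hcab' : σ x ≠ σ z := hcbb ▸ hcab
    have hxy : x ≠ y := fun h => hcab (h ▸ rfl)
    have hxz : x ≠ z := fun h => hcab' (h ▸ rfl)
    have hyz : y ≠ z := by rintro rfl; exact hnEab' hEab
    have hsub : T.lca x y ⊆ T.lca x z := hbm z hcbb.symm
    have hss : T.lca x y ⊂ T.lca x z := by
      refine ⟨hsub, fun hrev => ?_⟩
      apply hnEab'
      refine (hexp x z).mpr ⟨hcab', fun y' hy' => ?_⟩
      exact subset_trans hrev (hbm y' (hy'.trans hcbb.symm))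
    exact ⟨hxy, hxz, hyz, hss, (lca_eq_of_ssubset T hss).symm⟩
  · -- forbidden triple: triple is (b,b',a) with (a,b,b') = (z,x,y) ∈ F
    obtain ⟨hcab, hcbb, hbb', hEab, hEab'⟩ := ht
    dsimp only at hcab hcbb hbb' hEab hEab' ⊢
    -- here z=a, x=b, y=b'
    obtain ⟨hσ1, hbm1⟩ := (hexp z x).mp hEab
    obtain ⟨hσ2, hbm2⟩ := (hexp z y).mp hEab'
    have hA : T.lca z x = T.lca z y :=
      subset_antisymm (hbm1 y hcbb.symm) (hbm2 x hcbb)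
    set A := T.lca z x with hAdef
    obtain ⟨hAc, hzA, hxA⟩ := lca_spec T z x
    have hyA : y ∈ A := by rw [hA]; exact (lca_spec T z y).2.2
    have hxz : x ≠ z := fun h => hσ1 (h ▸ rfl)
    have hyz : y ≠ z := fun h => hσ2 (h ▸ rfl)
    have hcard : 1 < A.ncard :=
      (Set.one_lt_ncard (Set.toFinite A)).mpr ⟨x, hxA, z, hzA, hxz⟩
    obtain ⟨B, hB, D, hD, hdisj, hunion, hBA, hDA⟩ := hbin A hAc hcard
    have hlx : T.lca z x = A := rfl
    have hly : T.lca z y = A := hA.symm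
    have step : ∀ (P Q : Set V), P ∈ T.clusters → P ∪ Q = A → P ⊂ A →
        ∀ w ∈ A, T.lca z w = A → z ∈ P → w ∈ Q := by
      intro P Q hP hu hPA w hwA hlw hzP
      have hw : w ∈ P ∪ Q := hu ▸ hwA
      rcases hw with h | h
      · exact absurd (hlw ▸ lca_subset T hP hzP h) hPA.2
      · exact h
    have hss : T.lca x y ⊂ A := by
      refine ⟨lca_subset T hAc hxA hyA, fun hrev => ?_⟩
      have hz' : z ∈ B ∪ D := hunion ▸ hzA
      rcases hz' with hzB | hzD
      · have hxD : x ∈ D := step B D hB hunion hBA x hxA hlx hzB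
        have hyD : y ∈ D := step B D hB hunion hBA y hyA hly hzB
        exact hDA.2 (hrev.trans (lca_subset T hD hxD hyD))
      · have hxB : x ∈ B := step D B hD (Set.union_comm B D ▸ hunion) hDA x hxA hlx hzD
        have hyB : y ∈ B := step D B hD (Set.union_comm B D ▸ hunion) hDA y hyA hly hzD
        exact hBA.2 (hrev.trans (lca_subset T hB hxB hyB))
    have hlxz : T.lca x z = A := (lca_comm T x z).trans hlx
    have hss' : T.lca x y ⊂ T.lca x z := hlxz.symm ▸ hss
    exact ⟨hbb', hxz, hyz, hss', (lca_eq_of_ssubset T hss').symm⟩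
end

section
/- If (G,σ) is a binary-explainable BMG, then its binary-refinable tree (BRT) is a refinement of its least resolved tree (LRT). -/
lemma Finite.exists_minimal_wrt {α β : Type*} [PartialOrder β] {s' : Set α} (h : Finite s')
    (f : α → β) (s : Set α) (hs : s.Nonempty) (hss : s = s' := by rfl) :
    ∃ a ∈ s, ∀ a' ∈ s, f a' ≤ f a → f a = f a' := by
  subst hss
  obtain ⟨a, ha, hmin⟩ := Set.Finite.exists_minimalFor f s (Set.toFinite s) hs
  exact ⟨a, ha, fun a' ha' hle => le_antisymm (hmin ha' hle) hle⟩

lemma Finite.exists_maximal_wrt {α β : Type*} [PartialOrder β] {s' : Set α} (h : Finite s')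
    (f : α → β) (s : Set α) (hs : s.Nonempty) (hss : s = s' := by rfl) :
    ∃ a ∈ s, ∀ a' ∈ s, f a ≤ f a' → f a = f a' := by
  subst hss
  obtain ⟨a, ha, hmax⟩ := Set.Finite.exists_maximalFor f s (Set.toFinite s) hs
  exact ⟨a, ha, fun a' ha' hle => le_antisymm hle (hmax ha' hle)⟩

section BasicLemmas

variable {V : Type*} [Fintype V]

namespace PhyloTree

lemma comparable (T : PhyloTree V) {A A' : Set V} (hA : A ∈ T.clusters)
    (hA' : A' ∈ T.clusters) {x : V} (hx : x ∈ A) (hx' : x ∈ A') : A ⊆ A' ∨ A' ⊆ A := by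
  rcases T.nested A hA A' hA' with h | h | h
  · exact Or.inl h
  · exact Or.inr h
  · exact absurd rfl (h.ne_of_mem hx hx')

lemma lca_spec (T : PhyloTree V) (x y : V) :
    T.lca x y ∈ T.clusters ∧ x ∈ T.lca x y ∧ y ∈ T.lca x y := by
  set S : Set (Set V) := {A | A ∈ T.clusters ∧ x ∈ A ∧ y ∈ A} with hS
  have hne : S.Nonempty := ⟨Set.univ, T.univ_mem, trivial, trivial⟩
  obtain ⟨A₀, hA₀, hmin⟩ := (Set.toFinite S).exists_minimal_wrt id S hne
  have hmin' : ∀ A ∈ S, A₀ ⊆ A := by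
    intro A hA
    rcases T.comparable hA₀.1 hA.1 hA₀.2.1 hA.2.1 with h | h
    · exact h
    · exact (hmin A hA h).le
  have : T.lca x y = A₀ := by
    apply subset_antisymm (Set.sInter_subset_of_mem hA₀)
    exact Set.subset_sInter hmin'
  rw [this]; exact ⟨hA₀.1, hA₀.2⟩

lemma lca_mem (T : PhyloTree V) (x y : V) : T.lca x y ∈ T.clusters := (T.lca_spec x y).1
lemma mem_lca_left (T : PhyloTree V) (x y : V) : x ∈ T.lca x y := (T.lca_spec x y).2.1
lemma mem_lca_right (T : PhyloTree V) (x y : V) : y ∈ T.lca x y := (T.lca_spec x y).2.2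

lemma lca_subset (T : PhyloTree V) {A : Set V} {x y : V} (hA : A ∈ T.clusters)
    (hx : x ∈ A) (hy : y ∈ A) : T.lca x y ⊆ A :=
  Set.sInter_subset_of_mem ⟨hA, hx, hy⟩

lemma lca_comm (T : PhyloTree V) (x y : V) : T.lca x y = T.lca y x := by
  have h : {A | A ∈ T.clusters ∧ x ∈ A ∧ y ∈ A} = {A | A ∈ T.clusters ∧ y ∈ A ∧ x ∈ A} := by
    ext A; simp only [Set.mem_setOf_eq]; tauto
  unfold lca; rw [h]

/-- the clusters containing `x` and `y`/`y'` are comparable -/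
lemma lca_comparable (T : PhyloTree V) (x y y' : V) :
    T.lca x y ⊆ T.lca x y' ∨ T.lca x y' ⊆ T.lca x y :=
  T.comparable (T.lca_mem x y) (T.lca_mem x y') (T.mem_lca_left x y) (T.mem_lca_left x y')

/-- existence of a minimal cluster satisfying a predicate, among clusters containing a
common nonempty set -/
lemma min_cluster (T : PhyloTree V) {B : Set V} (hne : B.Nonempty) (P : Set V → Prop)
    (hP : ∀ A, P A → A ∈ T.clusters ∧ B ⊆ A) (hex : ∃ A, P A) :
    ∃ M, P M ∧ ∀ A, P A → M ⊆ A := by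
  set S : Set (Set V) := {A | P A} with hS
  obtain ⟨β, hβ⟩ := hne
  obtain ⟨M, hM, hmin⟩ := (Set.toFinite S).exists_minimal_wrt id S hex
  refine ⟨M, hM, fun A hA => ?_⟩
  rcases T.comparable (hP M hM).1 (hP A hA).1 ((hP M hM).2 hβ) ((hP A hA).2 hβ) with h | h
  · exact h
  · exact (hmin A hA h).le

lemma max_cluster (T : PhyloTree V) {x : V} (P : Set V → Prop)
    (hP : ∀ A, P A → A ∈ T.clusters ∧ x ∈ A) (hex : ∃ A, P A) :
    ∃ D, P D ∧ ∀ A, P A → D ⊆ A → A = D := by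
  set S : Set (Set V) := {A | P A} with hS
  obtain ⟨D, hD, hmax⟩ := (Set.toFinite S).exists_maximal_wrt id S hex
  exact ⟨D, hD, fun A hA h => (hmax A hA h).symm⟩

/-- if `lca x y' ⊂ lca x y` then `lca x y = lca y' y`. -/
lemma lca_outer_eq (T : PhyloTree V) {x y y' : V} (h : T.lca x y' ⊂ T.lca x y) :
    T.lca x y = T.lca y' y := by
  apply subset_antisymm
  · rcases T.comparable (T.lca_mem y' y) (T.lca_mem x y') (T.mem_lca_left y' y)
      (T.mem_lca_right x y') with hc | hc
    · exact absurd (T.lca_subset (T.lca_mem x y') (T.mem_lca_left x y')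
        (hc (T.mem_lca_right y' y))) h.not_subset
    · exact T.lca_subset (T.lca_mem y' y) (hc (T.mem_lca_left x y')) (T.mem_lca_right y' y)
  · exact T.lca_subset (T.lca_mem x y) (h.subset (T.mem_lca_right x y'))
      (T.mem_lca_right x y)

end PhyloTree

end BasicLemmas

section AhoMachinery

variable {V : Type*} [Fintype V] {R : Set (V × V × V)}

lemma ahoAdj_symm {L : Set V} {a b : V} (h : ahoAdj R L a b) : ahoAdj R L b a := by
  obtain ⟨h1, h2, z, hz, ht⟩ := h
  exact ⟨h2, h1, z, hz, ht.symm⟩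

lemma ahoComponent_subset {L : Set V} {x : V} (hx : x ∈ L) : ahoComponent R L x ⊆ L := by
  intro y hy
  induction hy with
  | refl => exact hx
  | tail _ hadj _ => exact hadj.2.1

lemma ahoComponent_mono {L K : Set V} (hLK : L ⊆ K) (x : V) :
    ahoComponent R L x ⊆ ahoComponent R K x := by
  intro y hy
  exact Relation.ReflTransGen.mono (r := ahoAdj R L) (p := ahoAdj R K)
    (fun a b ⟨h1, h2, z, hz, ht⟩ => ⟨hLK h1, hLK h2, z, hLK hz, ht⟩) x y hy

lemma ahoComponent_subset_of_mem {K : Set V} {x y : V} (h : y ∈ ahoComponent R K x) :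
    ahoComponent R K y ⊆ ahoComponent R K x :=
  fun _ hw => Relation.ReflTransGen.trans h hw

lemma self_mem_ahoComponent (L : Set V) (x : V) : x ∈ ahoComponent R L x :=
  Relation.ReflTransGen.refl

/-- Chain lemma: every Aho cluster properly contained in a cluster `L` of the Aho tree
is contained in a component (at some level `K ⊇ L`) that is properly inside `L`. -/
lemma aho_chain {Tbrt : PhyloTree V} (hbrt : IsAhoTree R Tbrt) :
    ∀ {A : Set V}, IsAhoCluster R A → ∀ {L : Set V}, L ∈ Tbrt.clusters → A ⊆ L → A ≠ L →
    ∃ K x', IsAhoCluster R K ∧ L ⊆ K ∧ x' ∈ K ∧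
      A ⊆ ahoComponent R K x' ∧ ahoComponent R K x' ⊂ L := by
  intro A hA
  induction hA with
  | univ =>
    intro L hL hsub hne
    exact absurd (subset_antisymm (Set.subset_univ L) hsub) (Ne.symm hne)
  | @component K₁ x₁ hK₁ hx₁ ih =>
    intro L hL hsub hne
    have hx₁A : x₁ ∈ ahoComponent R K₁ x₁ := self_mem_ahoComponent K₁ x₁
    have hK₁cl : K₁ ∈ Tbrt.clusters := by rw [hbrt]; exact hK₁
    have hcompsub : ahoComponent R K₁ x₁ ⊆ K₁ := ahoComponent_subset hx₁
    rcases Tbrt.comparable hK₁cl hL hx₁ (hsub hx₁A) with hKL | hLK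
    · by_cases hEq : K₁ = L
      · exact ⟨K₁, x₁, hK₁, hEq.ge, hx₁, subset_rfl, ssubset_of_subset_of_ne hsub hne⟩
      · obtain ⟨K, x', h1, h2, h3, h4, h5⟩ := ih hL hKL hEq
        exact ⟨K, x', h1, h2, h3, hcompsub.trans h4, h5⟩
    · exact ⟨K₁, x₁, hK₁, hLK, hx₁, subset_rfl, ssubset_of_subset_of_ne hsub hne⟩

/-- Components of the Aho graph on a cluster of the Aho tree are proper subsets. -/
lemma ahoComponent_proper {Tbrt : PhyloTree V} (hbrt : IsAhoTree R Tbrt) {L : Set V}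
    {p q : V} (hL : L ∈ Tbrt.clusters) (hp : p ∈ L) (hq : q ∈ L) (hne : q ≠ p) :
    ahoComponent R L p ⊂ L := by
  have hsing : IsAhoCluster R {p} := by
    have := Tbrt.singleton_mem p
    rwa [hbrt] at this
  have h1 : ({p} : Set V) ⊆ L := Set.singleton_subset_iff.mpr hp
  have h2 : ({p} : Set V) ≠ L := by
    intro h
    rw [← h] at hq
    exact hne hq
  obtain ⟨K, x', _, hLK, _, hsub, hlt⟩ := aho_chain hbrt hsing hL h1 h2
  have hpK : p ∈ ahoComponent R K x' := hsub rfl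
  calc ahoComponent R L p ⊆ ahoComponent R K p := ahoComponent_mono hLK p
    _ ⊆ ahoComponent R K x' := ahoComponent_subset_of_mem hpK
    _ ⊂ L := hlt

/-- The Aho tree displays all triples of its defining triple set. -/
lemma aho_displays {Tbrt : PhyloTree V} (hbrt : IsAhoTree R Tbrt) {p q z : V}
    (hmem : (p, q, z) ∈ R) (hpq : p ≠ q) (hpz : p ≠ z) (hqz : q ≠ z) :
    Tbrt.Displays p q z := by
  suffices h : ∀ n (L : Set V), L ∈ Tbrt.clusters → L.ncard ≤ n →
      p ∈ L → q ∈ L → z ∈ L → Tbrt.Displays p q z by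
    exact h (Set.univ.ncard) Set.univ Tbrt.univ_mem le_rfl trivial trivial trivial
  intro n
  induction n with
  | zero =>
    intro L hL hcard hp _ _
    have h0 : 0 < L.ncard := (Set.ncard_pos (Set.toFinite L)).mpr ⟨p, hp⟩
    omega
  | succ n ih =>
    intro L hL hcard hp hq hz
    set Cp := ahoComponent R L p with hCp
    have hCcl : Cp ∈ Tbrt.clusters := by
      rw [hbrt]
      exact IsAhoCluster.component (by rw [hbrt] at hL; exact hL) hp
    have hqC : q ∈ Cp := Relation.ReflTransGen.single ⟨hp, hq, z, hz, Or.inl hmem⟩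
    have hpC : p ∈ Cp := self_mem_ahoComponent L p
    have hproper : Cp ⊂ L := ahoComponent_proper hbrt hL hp hq (Ne.symm hpq)
    by_cases hzC : z ∈ Cp
    · exact ih Cp hCcl (by
        have := Set.ncard_lt_ncard hproper (Set.toFinite L)
        omega) hpC hqC hzC
    · refine ⟨hpq, hpz, hqz, ?_, ?_⟩
      · constructor
        · exact (Tbrt.lca_subset hCcl hpC hqC).trans (by
            rcases Tbrt.comparable (Tbrt.lca_mem p z) hCcl (Tbrt.mem_lca_left p z) hpC
              with h | h
            · exact absurd (h (Tbrt.mem_lca_right p z)) hzC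
            · exact h)
        · intro hcon
          exact hzC (Tbrt.lca_subset hCcl hpC hqC (hcon (Tbrt.mem_lca_right p z)))
      · apply subset_antisymm
        · have hCsub : Cp ⊆ Tbrt.lca q z := by
            rcases Tbrt.comparable (Tbrt.lca_mem q z) hCcl (Tbrt.mem_lca_left q z) hqC
              with h | h
            · exact absurd (h (Tbrt.mem_lca_right q z)) hzC
            · exact h
          exact Tbrt.lca_subset (Tbrt.lca_mem q z) (hCsub hpC) (Tbrt.mem_lca_right q z)
        · have hCsub : Cp ⊆ Tbrt.lca p z := by
            rcases Tbrt.comparable (Tbrt.lca_mem p z) hCcl (Tbrt.mem_lca_left p z) hpC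
              with h | h
            · exact absurd (h (Tbrt.mem_lca_right p z)) hzC
            · exact h
          exact Tbrt.lca_subset (Tbrt.lca_mem p z) (hCsub hqC) (Tbrt.mem_lca_right p z)

end AhoMachinery

section ExplainLemmas

variable {V C : Type*} [Fintype V] {E : V → V → Prop} {σ : V → C}

/-- In any explaining tree, every vertex has a best match of each available color. -/
lemma exists_best {T : PhyloTree V} (hT : Explains T σ E) (x : V) {c : C}
    (hc : c ≠ σ x) (hex : ∃ u, σ u = c) :
    ∃ b, σ b = c ∧ E x b ∧ ∀ u, σ u = c → T.lca x b ⊆ T.lca x u := by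
  set S : Set V := {u | σ u = c} with hS
  obtain ⟨b, hb, hmin⟩ :=
    (Set.toFinite S).exists_minimal_wrt (fun u => T.lca x u) S hex
  have hminb : ∀ u, σ u = c → T.lca x b ⊆ T.lca x u := by
    intro u hu
    rcases T.lca_comparable x u b with h | h
    · exact (hmin u hu h).le
    · exact h
  refine ⟨b, hb, (hT x b).mpr ⟨fun h => hc (hb ▸ h.symm), fun y' hy' => hminb y' (hy'.trans hb)⟩,
    hminb⟩

/-- Arcs are between distinct colors. -/
lemma arc_ne_color {T : PhyloTree V} (hT : Explains T σ E) {x y : V} (h : E x y) :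
    σ x ≠ σ y := ((hT x y).mp h).1

/-- main lemma 1: the Aho tree of `R^bin` explains `(E,σ)`, provided something does. -/
lemma tbrt_explains {T₀ Tbrt : PhyloTree V} (hT₀ : Explains T₀ σ E)
    (hbrt : IsAhoTree (Rbin E σ) Tbrt) : Explains Tbrt σ E := by
  have hdisp : ∀ p q z : V, (p, q, z) ∈ Rbin E σ → Tbrt.Displays p q z := by
    intro p q z hm
    have hdist : p ≠ q ∧ p ≠ z ∧ q ≠ z := by
      rcases hm with hinf | hforb
      · obtain ⟨h1, h2, h3, h4⟩ := hinf
        exact ⟨fun h => h1 (congrArg σ h), fun h => h1 ((congrArg σ h).trans h2.symm),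
          fun h => h4 (h ▸ h3)⟩
      · obtain ⟨h1, h2, h3, _, _⟩ := hforb
        exact ⟨h3, fun h => h1 (congrArg σ h).symm, fun h => (h2 ▸ h1) (congrArg σ h).symm⟩
    exact aho_displays hbrt hm hdist.1 hdist.2.1 hdist.2.2
  intro x y
  constructor
  · intro hE
    obtain ⟨hσ, _⟩ := (hT₀ x y).mp hE
    refine ⟨hσ, fun y' hy' => ?_⟩
    by_contra hns
    have hlt : Tbrt.lca x y' ⊂ Tbrt.lca x y := by
      rcases Tbrt.lca_comparable x y y' with h | h
      · exact absurd h hns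
      · exact ssubset_of_subset_of_ne h (fun hh => hns hh.ge)
    have hyy' : y' ≠ y := by
      rintro rfl
      exact (ssubset_irrefl _) hlt
    by_cases hE' : E x y'
    · -- forbidden triple (x,y',y): Tbrt displays y'y|x, contradiction
      have hforb : (y', y, x) ∈ Rbin E σ := by
        refine Or.inr ?_
        refine ⟨fun h => hσ (hy' ▸ h), hy', hyy', hE', hE⟩
      have hd := hdisp y' y x hforb
      have heq : Tbrt.lca x y = Tbrt.lca y' y := Tbrt.lca_outer_eq hlt
      have h1 : Tbrt.lca x y ⊂ Tbrt.lca y' x := heq ▸ hd.2.2.2.1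
      rw [Tbrt.lca_comm y' x] at h1
      exact (ssubset_irrefl _) (h1.trans hlt)
    · -- informative triple (x,y,y')
      have hinf : (x, y, y') ∈ Rbin E σ := Or.inl ⟨hσ, hy'.symm, hE, hE'⟩
      have hd := hdisp x y y' hinf
      exact (ssubset_irrefl _) (hd.2.2.2.1.trans hlt)
  · intro hbm
    obtain ⟨hσ, hmin⟩ := hbm
    obtain ⟨b₀, hσ₀, hE₀, _⟩ := exists_best hT₀ x (c := σ y) (fun h => hσ h.symm) ⟨y, rfl⟩
    by_contra hnE
    have hinf : (x, b₀, y) ∈ Rbin E σ :=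
      Or.inl ⟨fun h => hσ (hσ₀ ▸ h), hσ₀, hE₀, hnE⟩
    have hd := hdisp x b₀ y hinf
    exact hd.2.2.2.1.not_subset (hmin b₀ hσ₀)

end ExplainLemmas

section TheoremA

variable {V C : Type*} [Fintype V] {E : V → V → Prop} {σ : V → C}

theorem lrt_refines {Tlrt T : PhyloTree V} (hlrt : IsLRT Tlrt σ E)
    (hT : Explains T σ E) : Tlrt.clusters ⊆ T.clusters := by
  intro B hB
  by_cases hcard : B.ncard ≤ 1
  · have hne : B.Nonempty := Tlrt.nonempty_of_mem B hB
    have h1 : B.ncard = 1 := le_antisymm hcard ((Set.ncard_pos (Set.toFinite B)).mpr hne)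
    obtain ⟨v, rfl⟩ := Set.ncard_eq_one.mp h1
    exact T.singleton_mem v
  by_cases hu : B = Set.univ
  · exact hu ▸ T.univ_mem
  push_neg at hcard
  have hBne : B.Nonempty := Tlrt.nonempty_of_mem B hB
  -- the parent `M` of `B` in the LRT
  obtain ⟨M, ⟨hMcl, hBM⟩, hMmin'⟩ := Tlrt.min_cluster hBne
      (fun A => A ∈ Tlrt.clusters ∧ B ⊂ A)
      (fun A hA => ⟨hA.1, hA.2.subset⟩)
      ⟨Set.univ, Tlrt.univ_mem, ssubset_of_subset_of_ne (Set.subset_univ B) hu⟩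
  have hMmin : ∀ A, A ∈ Tlrt.clusters → B ⊂ A → M ⊆ A := fun A h1 h2 => hMmin' A ⟨h1, h2⟩
  -- minimality of the LRT provides witnesses (x, b, y)
  have hwit : ∃ p q w, E p q ∧ Tlrt.lca p q = B ∧ σ w = σ q ∧ Tlrt.lca p w = M := by
    by_contra hno
    have hB1 : ∀ v : V, ({v} : Set V) ≠ B := by
      intro v h
      rw [← h, Set.ncard_singleton] at hcard
      omega
    set T' : PhyloTree V := ⟨Tlrt.clusters \ {B},
      fun A hA => Tlrt.nonempty_of_mem A hA.1,
      ⟨Tlrt.univ_mem, fun h => hu (Set.mem_singleton_iff.mp h).symm⟩,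
      fun v => ⟨Tlrt.singleton_mem v, fun h => hB1 v (Set.mem_singleton_iff.mp h)⟩,
      fun A hA A' hA' => Tlrt.nested A hA.1 A' hA'.1⟩ with hT'def
    apply hlrt.2 B hB hu hcard T' rfl
    -- the contracted tree still explains (E, σ): contradiction
    have hl'pos : ∀ p q : V, Tlrt.lca p q = B → T'.lca p q = M := by
      intro p q h
      have hp : p ∈ B := h ▸ Tlrt.mem_lca_left p q
      have hq : q ∈ B := h ▸ Tlrt.mem_lca_right p q
      apply subset_antisymm
      · exact Set.sInter_subset_of_mem
          ⟨⟨hMcl, fun hh => hBM.ne (Set.mem_singleton_iff.mp hh).symm⟩,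
            hBM.subset hp, hBM.subset hq⟩
      · apply Set.subset_sInter
        rintro A ⟨⟨hAcl, hAB⟩, hpA, hqA⟩
        have hABne : A ≠ B := fun hh => hAB (Set.mem_singleton_iff.mpr hh)
        have hBA : B ⊆ A := by
          rcases Tlrt.comparable hAcl hB hpA hp with hc | hc
          · have hsub : Tlrt.lca p q ⊆ A := Tlrt.lca_subset hAcl hpA hqA
            rw [h] at hsub
            exact (hABne (subset_antisymm hc hsub)).elim
          · exact hc
        exact hMmin A hAcl (ssubset_of_subset_of_ne hBA (Ne.symm hABne))
    have hl'neg : ∀ p q : V, Tlrt.lca p q ≠ B → T'.lca p q = Tlrt.lca p q := by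
      intro p q h
      apply subset_antisymm
      · exact Set.sInter_subset_of_mem
          ⟨⟨Tlrt.lca_mem p q, fun hh => h (Set.mem_singleton_iff.mp hh)⟩,
            Tlrt.mem_lca_left p q, Tlrt.mem_lca_right p q⟩
      · exact Set.subset_sInter (fun A hA => Tlrt.lca_subset hA.1.1 hA.2.1 hA.2.2)
    intro s t
    constructor
    · intro hE
      obtain ⟨hσst, hmin⟩ := (hlrt.1 s t).mp hE
      refine ⟨hσst, fun w hw => ?_⟩
      by_cases h1 : Tlrt.lca s t = B
      · by_cases h2 : Tlrt.lca s w = B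
        · rw [hl'pos s t h1, hl'pos s w h2]
        · rw [hl'pos s t h1, hl'neg s w h2]
          have hsub : B ⊆ Tlrt.lca s w := h1 ▸ hmin w hw
          exact hMmin _ (Tlrt.lca_mem s w) (ssubset_of_subset_of_ne hsub (Ne.symm h2))
      · by_cases h2 : Tlrt.lca s w = B
        · rw [hl'neg s t h1, hl'pos s w h2]
          exact (hmin w hw).trans (h2 ▸ hBM.subset)
        · rw [hl'neg s t h1, hl'neg s w h2]
          exact hmin w hw
    · intro hbm
      obtain ⟨hσst, hmin'⟩ := hbm
      obtain ⟨b₀, hσ₀, hE₀, hmin₀⟩ :=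
        exists_best hlrt.1 s (c := σ t) (fun h => hσst h.symm) ⟨t, rfl⟩
      have hclaim : Tlrt.lca s t ⊆ Tlrt.lca s b₀ := by
        by_contra hns
        have hlt : Tlrt.lca s b₀ ⊂ Tlrt.lca s t := by
          rcases Tlrt.lca_comparable s t b₀ with h | h
          · exact absurd h hns
          · exact ssubset_of_subset_of_ne h (fun hh => hns hh.ge)
        have hkey := hmin' b₀ hσ₀
        by_cases hmB : Tlrt.lca s b₀ = B
        · rw [hl'pos s b₀ hmB] at hkey
          have hntB : Tlrt.lca s t ≠ B := by
            intro hh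
            rw [hmB, hh] at hlt
            exact ssubset_irrefl B hlt
          rw [hl'neg s t hntB] at hkey
          have hBlt : B ⊂ Tlrt.lca s t := hmB ▸ hlt
          have hMsub : M ⊆ Tlrt.lca s t := hMmin _ (Tlrt.lca_mem s t) hBlt
          exact hno ⟨s, b₀, t, hE₀, hmB, hσ₀.symm, subset_antisymm hkey hMsub⟩
        · rw [hl'neg s b₀ hmB] at hkey
          by_cases hntB : Tlrt.lca s t = B
          · rw [hl'pos s t hntB] at hkey
            have hc1 : M < B := lt_of_le_of_lt hkey (hntB ▸ hlt)
            exact lt_irrefl M (lt_trans hc1 hBM)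
          · rw [hl'neg s t hntB] at hkey
            exact hlt.not_subset hkey
      exact (hlrt.1 s t).mpr ⟨hσst, fun w hw => hclaim.trans (hmin₀ w hw)⟩
  obtain ⟨x, b, y, hExb, hlcaB, hσyb, hlcaM⟩ := hwit
  have hxB : x ∈ B := hlcaB ▸ Tlrt.mem_lca_left x b
  have hbB : b ∈ B := hlcaB ▸ Tlrt.mem_lca_right x b
  have hyM : y ∈ M := hlcaM ▸ Tlrt.mem_lca_right x y
  have hyB : y ∉ B := by
    intro hyB
    have hsub : Tlrt.lca x y ⊆ B := Tlrt.lca_subset hB hxB hyB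
    rw [hlcaM] at hsub
    exact hBM.not_subset hsub
  have hσxb : σ x ≠ σ b := arc_ne_color hlrt.1 hExb
  -- Step 2: the out-neighbours of `x` of color `σ b` are exactly the `σ b`-leaves of `B`
  have hstep2a : ∀ u, σ u = σ b → E x u → u ∈ B := by
    intro u hσu hEu
    have hsub := ((hlrt.1 x u).mp hEu).2 b hσu.symm
    rw [hlcaB] at hsub
    exact hsub (Tlrt.mem_lca_right x u)
  have hstep2b : ∀ u, σ u = σ b → u ∈ B → E x u := by
    intro u hσu huB
    refine (hlrt.1 x u).mpr ⟨fun h => hσxb (h.trans hσu), fun w hw => ?_⟩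
    have h1 : Tlrt.lca x u ⊆ B := Tlrt.lca_subset hB hxB huB
    have h2 : Tlrt.lca x b ⊆ Tlrt.lca x w := ((hlrt.1 x b).mp hExb).2 w (hw.trans hσu)
    rw [hlcaB] at h2
    exact h1.trans h2
  -- `L`: the smallest cluster of `T` containing `B`
  obtain ⟨L, ⟨hLcl, hBL⟩, hLmin'⟩ := T.min_cluster hBne
      (fun A => A ∈ T.clusters ∧ B ⊆ A) (fun A hA => hA)
      ⟨Set.univ, T.univ_mem, Set.subset_univ B⟩
  have hLmin : ∀ A, A ∈ T.clusters → B ⊆ A → L ⊆ A := fun A h1 h2 => hLmin' A ⟨h1, h2⟩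
  by_cases hLB : L = B
  · exact hLB ▸ hLcl
  exfalso
  obtain ⟨z₀, hz₀L, hz₀B⟩ :=
    Set.exists_of_ssubset (ssubset_of_subset_of_ne hBL (Ne.symm hLB))
  -- Step 3: every `σ b`-colored leaf of `L` lies in `B`
  have hstep3 : ∀ u, σ u = σ b → u ∈ L → u ∈ B := by
    by_contra hcon
    push_neg at hcon
    obtain ⟨u₁, hσ1, hu₁L, hu₁B⟩ := hcon
    obtain ⟨b₁, hσb₁, hEb₁, hmin₁⟩ := exists_best hT x (c := σ b) (Ne.symm hσxb) ⟨b, rfl⟩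
    have hmTcl : T.lca x b₁ ∈ T.clusters := T.lca_mem x b₁
    have hm₁ : ∀ u', σ u' = σ b → E x u' → u' ∈ T.lca x b₁ := by
      intro u' hσ' hE'
      exact ((hT x u').mp hE').2 b₁ (hσb₁.trans hσ'.symm) (T.mem_lca_right x u')
    have hm₂ : ∀ u', σ u' = σ b → u' ∈ T.lca x b₁ → E x u' := by
      intro u' hσ' hu'
      refine (hT x u').mpr ⟨fun h => hσxb (h.trans hσ'), fun w hw => ?_⟩
      exact (T.lca_subset hmTcl (T.mem_lca_left x b₁) hu').trans (hmin₁ w (hw.trans hσ'))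
    by_cases hu₁m : u₁ ∈ T.lca x b₁
    · exact hu₁B (hstep2a u₁ hσ1 (hm₂ u₁ hσ1 hu₁m))
    · have hmTL : T.lca x b₁ ⊂ L := by
        rcases T.comparable hmTcl hLcl (T.mem_lca_left x b₁) (hBL hxB) with h | h
        · exact ssubset_of_subset_of_ne h (fun hh => hu₁m (hh ▸ hu₁L))
        · exact absurd (h hu₁L) hu₁m
      obtain ⟨D₁, ⟨hD₁cl, hmTD₁, hD₁L⟩, hD₁max⟩ := T.max_cluster (x := x)
          (fun A => A ∈ T.clusters ∧ T.lca x b₁ ⊆ A ∧ A ⊂ L)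
          (fun A hA => ⟨hA.1, hA.2.1 (T.mem_lca_left x b₁)⟩)
          ⟨T.lca x b₁, hmTcl, subset_rfl, hmTL⟩
      have hxD₁ : x ∈ D₁ := hmTD₁ (T.mem_lca_left x b₁)
      have hchild : ∀ Q, Q ∈ T.clusters → x ∈ Q → Q ⊆ D₁ ∨ L ⊆ Q := by
        intro Q hQ hxQ
        rcases T.comparable hQ hD₁cl hxQ hxD₁ with h | h
        · exact Or.inl h
        · rcases T.comparable hQ hLcl hxQ (hBL hxB) with h' | h'
          · by_cases hQL : Q = L
            · exact Or.inr hQL.ge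
            · exact Or.inl
                (hD₁max Q ⟨hQ, hmTD₁.trans h, ssubset_of_subset_of_ne h' hQL⟩ h).le
          · exact Or.inr h'
      obtain ⟨q, hqB, hqD₁⟩ : ∃ q, q ∈ B ∧ q ∉ D₁ := by
        by_contra hcc
        push_neg at hcc
        exact hD₁L.not_subset (hLmin D₁ hD₁cl (fun v hv => hcc v hv))
      have hσq : σ q ≠ σ b := by
        intro h
        exact hqD₁ (hmTD₁ (hm₁ q h (hstep2b q h hqB)))
      obtain ⟨b₂, hσb₂, hEqb₂, hmin₂⟩ :=
        exists_best hlrt.1 q (c := σ b) (Ne.symm hσq) ⟨b, rfl⟩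
      have hb₂B : b₂ ∈ B :=
        (hmin₂ b rfl).trans (Tlrt.lca_subset hB hqB hbB) (Tlrt.mem_lca_right q b₂)
      have hb₂D₁ : b₂ ∈ D₁ := hmTD₁ (hm₁ b₂ hσb₂ (hstep2b b₂ hσb₂ hb₂B))
      have hD₁mq : D₁ ⊆ T.lca q b₂ := by
        rcases T.comparable (T.lca_mem q b₂) hD₁cl (T.mem_lca_right q b₂) hb₂D₁ with h | h
        · exact absurd (h (T.mem_lca_left q b₂)) hqD₁
        · exact h
      have hLmq : L ⊆ T.lca q b₂ := by
        rcases hchild (T.lca q b₂) (T.lca_mem q b₂) (hD₁mq hxD₁) with h | h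
        · exact absurd (h (T.mem_lca_left q b₂)) hqD₁
        · exact h
      have hEqu₁ : E q u₁ := by
        refine (hT q u₁).mpr ⟨fun h => hσq (h.trans hσ1), fun w hw => ?_⟩
        have h1 : T.lca q u₁ ⊆ T.lca q b₂ :=
          T.lca_subset (T.lca_mem q b₂) (T.mem_lca_left q b₂) (hLmq hu₁L)
        exact h1.trans (((hT q b₂).mp hEqb₂).2 w ((hw.trans hσ1).trans hσb₂.symm))
      have hnear := ((hlrt.1 q u₁).mp hEqu₁).2 b₂ (hσb₂.trans hσ1.symm)
      exact hu₁B ((hnear.trans ((hmin₂ b rfl).trans (Tlrt.lca_subset hB hqB hbB)))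
        (Tlrt.mem_lca_right q u₁))
  -- Step 4 and 5
  have hyL : y ∉ L := fun h => hyB (hstep3 y hσyb h)
  have hσz₀ : σ z₀ ≠ σ b := fun h => hz₀B (hstep3 z₀ h hz₀L)
  obtain ⟨b₄, hσ4, hE4, hmin₄⟩ := exists_best hlrt.1 z₀ (c := σ b) (Ne.symm hσz₀) ⟨b, rfl⟩
  by_cases hout : ∀ w, σ w = σ b → E z₀ w → w ∈ L
  · have hb₄B : b₄ ∈ B := hstep3 b₄ hσ4 (hout b₄ hσ4 hE4)
    have hBm₀ : B ⊂ Tlrt.lca z₀ b₄ := by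
      rcases Tlrt.comparable (Tlrt.lca_mem z₀ b₄) hB (Tlrt.mem_lca_right z₀ b₄) hb₄B
        with h | h
      · exact absurd (h (Tlrt.mem_lca_left z₀ b₄)) hz₀B
      · exact ssubset_of_subset_of_ne h
          (fun hh => hz₀B (by rw [hh]; exact Tlrt.mem_lca_left z₀ b₄))
    have hym₀ : y ∈ Tlrt.lca z₀ b₄ := hMmin _ (Tlrt.lca_mem z₀ b₄) hBm₀ hyM
    have hEz₀y : E z₀ y := by
      refine (hlrt.1 z₀ y).mpr ⟨fun h => hσz₀ (h.trans hσyb), fun w hw => ?_⟩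
      exact (Tlrt.lca_subset (Tlrt.lca_mem z₀ b₄) (Tlrt.mem_lca_left z₀ b₄) hym₀).trans
        (hmin₄ w (hw.trans hσyb))
    exact hyL (hout y hσyb hEz₀y)
  · push_neg at hout
    obtain ⟨w, hσw, hEw, hwL⟩ := hout
    have h1 : T.lca z₀ w ⊆ T.lca z₀ b := ((hT z₀ w).mp hEw).2 b hσw.symm
    have h2 : T.lca z₀ b ⊆ L := T.lca_subset hLcl hz₀L (hBL hbB)
    exact hwL (h2 (h1 (T.mem_lca_right z₀ w)))

end TheoremA

/-- Corollary: BRT refines LRT.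
If `(G,σ)` is a binary-explainable BMG, then its binary-refinable tree (BRT), i.e. the
Aho tree of `R^bin(G,σ)`, is a refinement of its least resolved tree (LRT). -/
theorem stmt5 {V C : Type*} [Fintype V] (E : V → V → Prop) (σ : V → C)
    (hbe : BinaryExplainable E σ)
    (Tbrt Tlrt : PhyloTree V)
    (hbrt : IsAhoTree (Rbin E σ) Tbrt) (hlrt : IsLRT Tlrt σ E) :
    Tbrt.Refines Tlrt := by
  obtain ⟨T₀, _, hT₀⟩ := hbe
  exact lrt_refines hlrt (tbrt_explains hT₀ hbrt)
end
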